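/- For the sequence ℓ_s = ℓ_1^{α^{s-1}} with α ≥ 2 and 0 < ℓ_1 ≤ 1/3, and h_s = ℓ_s - 2ℓ_{s+1} (with ℓ_0 = 1, h_0 = 1 - 2ℓ_1), the inequality ∑_{k=0}^{n} 1/(2^k h_k) ≤ 7/(2^n h_n) holds for all n ≥ 0. -/

import Mathlib

theorem stmt_2 (α l1 : ℝ) (hα : 2 ≤ α) (hl1 : 0 < l1) (hl1' : l1 ≤ 1/3)
    (ℓ h : ℕ → ℝ) (hℓ0 : ℓ 0 = 1)
    (hℓ : ∀ s : ℕ, 1 ≤ s → ℓ s = l1 ^ (α ^ (s - 1)))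
    (hh : ∀ s : ℕ, h s = ℓ s - 2 * ℓ (s + 1)) (n : ℕ) :
    ∑ k ∈ Finset.range (n + 1), 1 / (2 ^ k * h k) ≤ 7 / (2 ^ n * h n) := by
  have hα0 : (0:ℝ) < α := by linarith
  have hl1le1 : l1 ≤ 1 := by linarith
  have hℓpos : ∀ s, 0 < ℓ s := by
    intro s
    rcases Nat.eq_zero_or_pos s with h0 | h1
    · rw [h0, hℓ0]; norm_num
    · rw [hℓ s h1]; exact Real.rpow_pos_of_pos hl1 _
  have hexp1 : ∀ s : ℕ, (1:ℝ) ≤ α ^ s := fun s => one_le_pow₀ (by linarith)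
  have hℓle : ∀ s, 1 ≤ s → ℓ s ≤ l1 := by
    intro s hs
    rw [hℓ s hs]
    calc l1 ^ (α ^ (s-1)) ≤ l1 ^ (1:ℝ) :=
          Real.rpow_le_rpow_of_exponent_ge hl1 hl1le1 (hexp1 (s-1))
      _ = l1 := Real.rpow_one l1
  have hℓ9 : ∀ s, 2 ≤ s → ℓ s ≤ 1/9 := by
    intro s hs
    rw [hℓ s (by omega)]
    have he : (2:ℝ) ≤ α ^ (s-1) := by
      calc (2:ℝ) ≤ α := hα
        _ ≤ α ^ (s-1) := le_self_pow₀ (by linarith) (by omega)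
    calc l1 ^ (α ^ (s-1)) ≤ l1 ^ (2:ℝ) :=
          Real.rpow_le_rpow_of_exponent_ge hl1 hl1le1 he
      _ = l1 ^ 2 := Real.rpow_two l1
      _ ≤ 1/9 := by nlinarith
  have hℓsq : ∀ s, 1 ≤ s → ℓ (s+1) ≤ ℓ s ^ 2 := by
    intro s hs
    have hexps : α ^ ((s+1)-1) = α ^ (s-1) * α := by
      have : (s+1)-1 = (s-1)+1 := by omega
      rw [this, pow_succ]
    rw [hℓ (s+1) (by omega), hℓ s hs, hexps, Real.rpow_mul hl1.le]
    have hXpos : 0 < l1 ^ (α ^ (s-1)) := Real.rpow_pos_of_pos hl1 _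
    have hXle1 : l1 ^ (α ^ (s-1)) ≤ 1 :=
      Real.rpow_le_one hl1.le hl1le1 (by linarith [hexp1 (s-1)])
    calc (l1 ^ (α ^ (s-1))) ^ α ≤ (l1 ^ (α ^ (s-1))) ^ (2:ℝ) :=
          Real.rpow_le_rpow_of_exponent_ge hXpos hXle1 hα
      _ = (l1 ^ (α ^ (s-1))) ^ 2 := Real.rpow_two _
  have hhub : ∀ s, h s ≤ ℓ s := by
    intro s; rw [hh s]
    have := hℓpos (s+1); linarith
  have hhlb : ∀ s, 1 ≤ s → ℓ s - 2 * ℓ s ^ 2 ≤ h s := by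
    intro s hs; rw [hh s]; linarith [hℓsq s hs]
  have hh0 : (1:ℝ)/3 ≤ h 0 := by
    rw [hh 0, hℓ0]
    have := hℓle 1 le_rfl; linarith
  have hhpos : ∀ s, 0 < h s := by
    intro s
    rcases Nat.eq_zero_or_pos s with h0 | h1
    · rw [h0]; linarith
    · have h1' := hhlb s h1
      have h2 := hℓle s h1
      have h3 := hℓpos s
      nlinarith
  have r0 : h 1 ≤ h 0 := by
    have := hhub 1
    have := hℓle 1 le_rfl
    rw [hh 0, hℓ0]
    have := hℓle 1 le_rfl
    linarith
  have r1 : h 2 ≤ h 1 := by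
    have h1 := hhub 2
    have h2 := hℓsq 1 le_rfl
    have h3 := hhlb 1 le_rfl
    have h4 := hℓle 1 le_rfl
    have h5 := hℓpos 1
    nlinarith
  have rk : ∀ k, 2 ≤ k → 7 * h (k+1) ≤ h k := by
    intro k hk
    have h1 := hhub (k+1)
    have h2 := hℓsq k (by omega)
    have h3 := hhlb k (by omega)
    have h4 := hℓ9 k hk
    have h5 := hℓpos k
    nlinarith
  -- abbreviate the terms
  set a : ℕ → ℝ := fun k => 1/(2^k * h k) with ha
  have hdpos : ∀ k, (0:ℝ) < 2^k * h k := fun k => mul_pos (by positivity) (hhpos k)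
  have hapos : ∀ k, 0 < a k := fun k => by
    simp only [ha]; exact div_pos one_pos (hdpos k)
  have step : ∀ k, h (k+1) ≤ h k → a k ≤ 2 * a (k+1) := by
    intro k hk
    simp only [ha]
    rw [mul_one_div, div_le_div_iff₀ (hdpos k) (hdpos (k+1)), pow_succ]
    have := hhpos (k+1)
    have := hhpos k
    have : (0:ℝ) < (2:ℝ)^k := by positivity
    nlinarith
  have key : ∀ k, 2 ≤ k → a k ≤ 2/7 * a (k+1) := by
    intro k hk
    simp only [ha]
    rw [mul_one_div, div_le_div_iff₀ (hdpos k) (hdpos (k+1)), pow_succ]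
    have h1 := rk k hk
    have := hhpos (k+1)
    have := hhpos k
    have : (0:ℝ) < (2:ℝ)^k := by positivity
    nlinarith
  have a01 : a 0 ≤ 2 * a 1 := step 0 r0
  have a12 : a 1 ≤ 2 * a 2 := step 1 r1
  have S2 : ∑ k ∈ Finset.range 3, a k ≤ 7 * a 2 := by
    rw [Finset.sum_range_succ, Finset.sum_range_succ, Finset.sum_range_one]
    linarith
  have main : ∀ m, ∑ k ∈ Finset.range (m+4), a k ≤ 3 * a (m+3) := by
    intro m
    induction m with
    | zero =>
      rw [show (0:ℕ)+4 = 3+1 from rfl, Finset.sum_range_succ]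
      have hk := key 2 le_rfl
      linarith
    | succ m ih =>
      rw [show m+1+4 = (m+4)+1 from rfl, Finset.sum_range_succ]
      have hk := key (m+3) (by omega)
      have := hapos (m+4)
      have : m+4+1 = m+3+1+1 := by omega
      have hk' : a (m+3) ≤ 2/7 * a (m+4) := by
        convert hk using 3 <;> omega
      linarith
  have goal_rhs : 7 / (2^n * h n) = 7 * a n := by
    simp only [ha]; ring
  rw [goal_rhs]
  match n with
  | 0 =>
    rw [Finset.sum_range_one]
    show a 0 ≤ 7 * a 0
    linarith [hapos 0]
  | 1 =>
    rw [Finset.sum_range_succ, Finset.sum_range_one]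
    show a 0 + a 1 ≤ 7 * a 1
    linarith [hapos 1]
  | 2 => exact le_trans S2 (by linarith [hapos 2])
  | (m+3) =>
    have := main m
    have := hapos (m+3)
    calc ∑ k ∈ Finset.range (m+3+1), a k = ∑ k ∈ Finset.range (m+4), a k := by norm_num
      _ ≤ 3 * a (m+3) := main m
      _ ≤ 7 * a (m+3) := by linarith
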